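/- Suppose k contains a square root i of −1 and 2 is invertible. For any unital associative superalgebra R there is an isomorphism of Lie superalgebras q_n(R⊗Q1) ≅ gl_{n|n}(R), given on generators by u_{ij}(r⊗1) ↦ e_{ij}(r) + (−1)^{|r|} e_{n+i,n+j}(r), u_{ij}(r⊗ν) ↦ e_{i,n+j}(r) + (−1)^{|r|} e_{n+i,j}(r), w_{ij}(r⊗1) ↦ i(−e_{i,n+j}(r) + (−1)^{|r|} e_{n+i,j}(r)), w_{ij}(r⊗ν) ↦ i(e_{ij}(r) − (−1)^{|r|} e_{n+i,n+j}(r)). -/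

import Mathlib

variable {k : Type} [CommRing k] [Invertible (2 : k)]
variable {R : Type} [Ring R] [Algebra k R]

/-- The multiplication of the graded tensor product `R ⊗ Q1`, in the model where
`(a, b)` represents `a ⊗ 1 + b ⊗ ν` (with `ν` odd, `ν² = 1`, Koszul signs via the
grading involution `σ` of `R`). -/
def mulQ (σ : R ≃ₐ[k] R) (p q : R × R) : R × R :=
  (p.1 * q.1 + p.2 * σ q.2, p.1 * q.2 + p.2 * σ q.1)

/-- The grading involution of `R ⊗ Q1` in the model above. -/
def tauQ (σ : R ≃ₐ[k] R) (p : R × R) : R × R := (σ p.1, -σ p.2)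

/-- The grading involution of `R ⊗ Q1` as a `k`-linear map. -/
def tauL (σ : R ≃ₐ[k] R) : (R × R) →ₗ[k] (R × R) :=
  LinearMap.prod (σ.toLinearMap ∘ₗ LinearMap.fst k R R)
    (-(σ.toLinearMap ∘ₗ LinearMap.snd k R R))

/-- The queer Lie superalgebra `q_n(A)` coordinatized by a superalgebra `A` with grading
involution `s`: block matrices `[[A,B],[ρ(B),ρ(A)]]` inside `gl_{n|n}(A)`, where `ρ = s`
entrywise (so `ρ(a) = (-1)^{|a|} a` on homogeneous elements). -/
def qSub (n : ℕ) (A : Type) [AddCommGroup A] [Module k A] (s : A →ₗ[k] A) :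
    Submodule k (Matrix (Fin n ⊕ Fin n) (Fin n ⊕ Fin n) A) where
  carrier := {M | (∀ i j, M (Sum.inr i) (Sum.inr j) = s (M (Sum.inl i) (Sum.inl j))) ∧
                  (∀ i j, M (Sum.inr i) (Sum.inl j) = s (M (Sum.inl i) (Sum.inr j)))}
  add_mem' := by
    intro M N hM hN
    exact ⟨fun i j => by simp [Matrix.add_apply, hM.1 i j, hN.1 i j],
           fun i j => by simp [Matrix.add_apply, hM.2 i j, hN.2 i j]⟩
  zero_mem' := ⟨fun i j => by simp, fun i j => by simp⟩
  smul_mem' := by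
    intro c M hM
    exact ⟨fun i j => by simp [Matrix.smul_apply, hM.1 i j],
           fun i j => by simp [Matrix.smul_apply, hM.2 i j]⟩

/-- The grading involution of `gl_{n|n}(A)`: the parity of `e_{ij}(a)` is `|i| + |j| + |a|`,
so the involution applies `s` entrywise with a sign `-1` on the off-diagonal blocks. -/
def gInvMat {n : ℕ} {A : Type} [Neg A] (s : A → A)
    (M : Matrix (Fin n ⊕ Fin n) (Fin n ⊕ Fin n) A) :
    Matrix (Fin n ⊕ Fin n) (Fin n ⊕ Fin n) A :=
  Matrix.of fun i j => if i.isLeft = j.isLeft then s (M i j) else -(s (M i j))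

/-- The set of graded commutators `[x,y] = xy - (-1)^{|x||y|} yx` of homogeneous elements of
a submodule `V` of `gl_{n|n}(A)` (homogeneity w.r.t. the grading involution `gInvMat s`). -/
def gBrSet (n : ℕ) {A : Type} [Ring A] [Module k A]
    (s : A → A) (V : Submodule k (Matrix (Fin n ⊕ Fin n) (Fin n ⊕ Fin n) A)) :
    Set (Matrix (Fin n ⊕ Fin n) (Fin n ⊕ Fin n) A) :=
  {z | ∃ x ∈ V, ∃ y ∈ V, ∃ px py : ZMod 2,
    gInvMat s x = ((-1 : ℤ) ^ px.val) • x ∧ gInvMat s y = ((-1 : ℤ) ^ py.val) • y ∧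
    z = x * y - ((-1 : ℤ) ^ (px * py).val) • (y * x)}

/-- The derived sub-superalgebra `[V, V]`: the span of graded commutators of homogeneous
elements of `V`. -/
def derivedSub (n : ℕ) {A : Type} [Ring A] [Module k A]
    (s : A → A) (V : Submodule k (Matrix (Fin n ⊕ Fin n) (Fin n ⊕ Fin n) A)) :
    Submodule k (Matrix (Fin n ⊕ Fin n) (Fin n ⊕ Fin n) A) :=
  Submodule.span k (gBrSet n s V)

/-- `u_{ij}(s)` for `q_n(S)` over a superalgebra `S` with grading involution `t`. -/
def uMat (n : ℕ) {A : Type} [AddCommMonoid A] (t : A → A) (i j : Fin n) (a : A) :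
    Matrix (Fin n ⊕ Fin n) (Fin n ⊕ Fin n) A :=
  Matrix.single (Sum.inl i) (Sum.inl j) a +
    Matrix.single (Sum.inr i) (Sum.inr j) (t a)

/-- `w_{ij}(s)` for `q_n(S)` over a superalgebra `S` with grading involution `t`. -/
def wMat (n : ℕ) {A : Type} [AddCommMonoid A] (t : A → A) (i j : Fin n) (a : A) :
    Matrix (Fin n ⊕ Fin n) (Fin n ⊕ Fin n) A :=
  Matrix.single (Sum.inl i) (Sum.inr j) a +
    Matrix.single (Sum.inr i) (Sum.inl j) (t a)

/-- Matrix multiplication over `R ⊗ Q1` (modelled on `R × R` with multiplication `mulQ σ`). -/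
def mmulQ (σ : R ≃ₐ[k] R) {m : Type} [Fintype m] (M N : Matrix m m (R × R)) :
    Matrix m m (R × R) :=
  Matrix.of fun i j => ∑ l, mulQ σ (M i l) (N l j)


section Aux

variable (σ : R ≃ₐ[k] R) (im : k)

/-- The forward map, entrywise, defined on all matrices. -/
def phiFun (n : ℕ) (M : Matrix (Fin n ⊕ Fin n) (Fin n ⊕ Fin n) (R × R)) :
    Matrix (Fin n ⊕ Fin n) (Fin n ⊕ Fin n) R :=
  Matrix.of fun x y => Sum.elim
    (fun i => Sum.elim
      (fun j => (M (Sum.inl i) (Sum.inl j)).1 + im • (M (Sum.inl i) (Sum.inr j)).2)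
      (fun j => (M (Sum.inl i) (Sum.inl j)).2 - im • (M (Sum.inl i) (Sum.inr j)).1) y)
    (fun i => Sum.elim
      (fun j => -(M (Sum.inr i) (Sum.inr j)).2 + im • (M (Sum.inr i) (Sum.inl j)).1)
      (fun j => (M (Sum.inr i) (Sum.inr j)).1 + im • (M (Sum.inr i) (Sum.inl j)).2) y)
    x

/-- The inverse map, entrywise. -/
def psiFun (n : ℕ) (X : Matrix (Fin n ⊕ Fin n) (Fin n ⊕ Fin n) R) :
    Matrix (Fin n ⊕ Fin n) (Fin n ⊕ Fin n) (R × R) :=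
  Matrix.of fun x y => Sum.elim
    (fun i => Sum.elim
      (fun j => ((⅟(2:k)) • (X (Sum.inl i) (Sum.inl j) + σ (X (Sum.inr i) (Sum.inr j))),
                 (⅟(2:k)) • (X (Sum.inl i) (Sum.inr j) + σ (X (Sum.inr i) (Sum.inl j)))))
      (fun j => ((⅟(2:k) * -im) • (σ (X (Sum.inr i) (Sum.inl j)) - X (Sum.inl i) (Sum.inr j)),
                 (⅟(2:k) * -im) • (X (Sum.inl i) (Sum.inl j) - σ (X (Sum.inr i) (Sum.inr j))))) y)
    (fun i => Sum.elim
      (fun j => (σ ((⅟(2:k) * -im) • (σ (X (Sum.inr i) (Sum.inl j)) - X (Sum.inl i) (Sum.inr j))),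
                 -σ ((⅟(2:k) * -im) • (X (Sum.inl i) (Sum.inl j) - σ (X (Sum.inr i) (Sum.inr j))))))
      (fun j => (σ ((⅟(2:k)) • (X (Sum.inl i) (Sum.inl j) + σ (X (Sum.inr i) (Sum.inr j)))),
                 -σ ((⅟(2:k)) • (X (Sum.inl i) (Sum.inr j) + σ (X (Sum.inr i) (Sum.inl j)))))) y)
    x

lemma tauL_fst (p : R × R) : (tauL σ p).1 = σ p.1 := rfl
lemma tauL_snd (p : R × R) : (tauL σ p).2 = -σ p.2 := rfl

lemma mem_qSub_iff {n : ℕ} {A : Type} [AddCommGroup A] [Module k A] {s : A →ₗ[k] A}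
    {M : Matrix (Fin n ⊕ Fin n) (Fin n ⊕ Fin n) A} :
    M ∈ qSub n A s ↔
      ((∀ i j, M (Sum.inr i) (Sum.inr j) = s (M (Sum.inl i) (Sum.inl j))) ∧
       (∀ i j, M (Sum.inr i) (Sum.inl j) = s (M (Sum.inl i) (Sum.inr j)))) := Iff.rfl

lemma psi_mem (n : ℕ) (X : Matrix (Fin n ⊕ Fin n) (Fin n ⊕ Fin n) R) :
    psiFun σ im n X ∈ qSub n (R × R) (tauL σ) := by
  refine ⟨fun i j => ?_, fun i j => ?_⟩ <;> rfl

lemma phi_psi (hσ : ∀ a, σ (σ a) = a) (him : im * im = -1) (n : ℕ)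
    (X : Matrix (Fin n ⊕ Fin n) (Fin n ⊕ Fin n) R) :
    phiFun im n (psiFun σ im n X) = X := by
  ext x y
  rcases x with i | i <;> rcases y with j | j <;>
    simp only [phiFun, psiFun, Matrix.of_apply, Sum.elim_inl, Sum.elim_inr,
      map_smul, map_add, map_sub, map_neg, hσ, smul_neg, neg_sub, neg_neg] <;>
    match_scalars <;>
    (first
      | ring1
      | linear_combination (norm := ring1) (1:k) * him
      | linear_combination (norm := ring1) (-1:k) * him
      | linear_combination (norm := ring1) (⅟(2:k)*2) * him
      | linear_combination (norm := ring1) (-(⅟(2:k)*2)) * him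
      | linear_combination (norm := ring1) (⅟(2:k)) * him
      | linear_combination (norm := ring1) (-(⅟(2:k))) * him
      | linear_combination (norm := ring1) (2:k) * him
      | linear_combination (norm := ring1) (-2:k) * him
      | linear_combination (norm := ring1) (1:k) * invOf_mul_self (2:k)
      | linear_combination (norm := ring1) (-1:k) * invOf_mul_self (2:k)
      | linear_combination (norm := ring1) (⅟(2:k)) * invOf_mul_self (2:k)
      | linear_combination (norm := ring1) (-(⅟(2:k))) * invOf_mul_self (2:k)
      | linear_combination (norm := ring1) (1:k) * him + (1:k) * invOf_mul_self (2:k)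
      | linear_combination (norm := ring1) (1:k) * him + (-1:k) * invOf_mul_self (2:k)
      | linear_combination (norm := ring1) (1:k) * him + (⅟(2:k)) * invOf_mul_self (2:k)
      | linear_combination (norm := ring1) (1:k) * him + (-(⅟(2:k))) * invOf_mul_self (2:k)
      | linear_combination (norm := ring1) (-1:k) * him + (1:k) * invOf_mul_self (2:k)
      | linear_combination (norm := ring1) (-1:k) * him + (-1:k) * invOf_mul_self (2:k)
      | linear_combination (norm := ring1) (-1:k) * him + (⅟(2:k)) * invOf_mul_self (2:k)
      | linear_combination (norm := ring1) (-1:k) * him + (-(⅟(2:k))) * invOf_mul_self (2:k)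
      | linear_combination (norm := ring1) (⅟(2:k)*2) * him + (1:k) * invOf_mul_self (2:k)
      | linear_combination (norm := ring1) (⅟(2:k)*2) * him + (-1:k) * invOf_mul_self (2:k)
      | linear_combination (norm := ring1) (⅟(2:k)*2) * him + (⅟(2:k)) * invOf_mul_self (2:k)
      | linear_combination (norm := ring1) (⅟(2:k)*2) * him + (-(⅟(2:k))) * invOf_mul_self (2:k)
      | linear_combination (norm := ring1) (-(⅟(2:k)*2)) * him + (1:k) * invOf_mul_self (2:k)
      | linear_combination (norm := ring1) (-(⅟(2:k)*2)) * him + (-1:k) * invOf_mul_self (2:k)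
      | linear_combination (norm := ring1) (-(⅟(2:k)*2)) * him + (⅟(2:k)) * invOf_mul_self (2:k)
      | linear_combination (norm := ring1) (-(⅟(2:k)*2)) * him + (-(⅟(2:k))) * invOf_mul_self (2:k)
      | linear_combination (norm := ring1) (⅟(2:k)) * him + (1:k) * invOf_mul_self (2:k)
      | linear_combination (norm := ring1) (⅟(2:k)) * him + (-1:k) * invOf_mul_self (2:k)
      | linear_combination (norm := ring1) (⅟(2:k)) * him + (⅟(2:k)) * invOf_mul_self (2:k)
      | linear_combination (norm := ring1) (⅟(2:k)) * him + (-(⅟(2:k))) * invOf_mul_self (2:k)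
      | linear_combination (norm := ring1) (-(⅟(2:k))) * him + (1:k) * invOf_mul_self (2:k)
      | linear_combination (norm := ring1) (-(⅟(2:k))) * him + (-1:k) * invOf_mul_self (2:k)
      | linear_combination (norm := ring1) (-(⅟(2:k))) * him + (⅟(2:k)) * invOf_mul_self (2:k)
      | linear_combination (norm := ring1) (-(⅟(2:k))) * him + (-(⅟(2:k))) * invOf_mul_self (2:k)
      | linear_combination (norm := ring1) (2:k) * him + (1:k) * invOf_mul_self (2:k)
      | linear_combination (norm := ring1) (2:k) * him + (-1:k) * invOf_mul_self (2:k)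
      | linear_combination (norm := ring1) (2:k) * him + (⅟(2:k)) * invOf_mul_self (2:k)
      | linear_combination (norm := ring1) (2:k) * him + (-(⅟(2:k))) * invOf_mul_self (2:k)
      | linear_combination (norm := ring1) (-2:k) * him + (1:k) * invOf_mul_self (2:k)
      | linear_combination (norm := ring1) (-2:k) * him + (-1:k) * invOf_mul_self (2:k)
      | linear_combination (norm := ring1) (-2:k) * him + (⅟(2:k)) * invOf_mul_self (2:k)
      | linear_combination (norm := ring1) (-2:k) * him + (-(⅟(2:k))) * invOf_mul_self (2:k))

lemma psi_phi (hσ : ∀ a, σ (σ a) = a) (him : im * im = -1) (n : ℕ)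
    (M : Matrix (Fin n ⊕ Fin n) (Fin n ⊕ Fin n) (R × R))
    (hM : M ∈ qSub n (R × R) (tauL σ)) :
    psiFun σ im n (phiFun im n M) = M := by
  obtain ⟨h1, h2⟩ := mem_qSub_iff.mp hM
  ext x y
  all_goals rcases x with i | i <;> rcases y with j | j <;>
    simp only [phiFun, psiFun, Matrix.of_apply, Sum.elim_inl, Sum.elim_inr,
      h1, h2, tauL_fst, tauL_snd,
      map_smul, map_add, map_sub, map_neg, hσ, smul_neg, neg_sub, neg_neg] <;>
    match_scalars <;>
    (first
      | ring1
      | linear_combination (norm := ring1) (1:k) * him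
      | linear_combination (norm := ring1) (-1:k) * him
      | linear_combination (norm := ring1) (⅟(2:k)*2) * him
      | linear_combination (norm := ring1) (-(⅟(2:k)*2)) * him
      | linear_combination (norm := ring1) (⅟(2:k)) * him
      | linear_combination (norm := ring1) (-(⅟(2:k))) * him
      | linear_combination (norm := ring1) (2:k) * him
      | linear_combination (norm := ring1) (-2:k) * him
      | linear_combination (norm := ring1) (1:k) * invOf_mul_self (2:k)
      | linear_combination (norm := ring1) (-1:k) * invOf_mul_self (2:k)
      | linear_combination (norm := ring1) (⅟(2:k)) * invOf_mul_self (2:k)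
      | linear_combination (norm := ring1) (-(⅟(2:k))) * invOf_mul_self (2:k)
      | linear_combination (norm := ring1) (1:k) * him + (1:k) * invOf_mul_self (2:k)
      | linear_combination (norm := ring1) (1:k) * him + (-1:k) * invOf_mul_self (2:k)
      | linear_combination (norm := ring1) (1:k) * him + (⅟(2:k)) * invOf_mul_self (2:k)
      | linear_combination (norm := ring1) (1:k) * him + (-(⅟(2:k))) * invOf_mul_self (2:k)
      | linear_combination (norm := ring1) (-1:k) * him + (1:k) * invOf_mul_self (2:k)
      | linear_combination (norm := ring1) (-1:k) * him + (-1:k) * invOf_mul_self (2:k)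
      | linear_combination (norm := ring1) (-1:k) * him + (⅟(2:k)) * invOf_mul_self (2:k)
      | linear_combination (norm := ring1) (-1:k) * him + (-(⅟(2:k))) * invOf_mul_self (2:k)
      | linear_combination (norm := ring1) (⅟(2:k)*2) * him + (1:k) * invOf_mul_self (2:k)
      | linear_combination (norm := ring1) (⅟(2:k)*2) * him + (-1:k) * invOf_mul_self (2:k)
      | linear_combination (norm := ring1) (⅟(2:k)*2) * him + (⅟(2:k)) * invOf_mul_self (2:k)
      | linear_combination (norm := ring1) (⅟(2:k)*2) * him + (-(⅟(2:k))) * invOf_mul_self (2:k)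
      | linear_combination (norm := ring1) (-(⅟(2:k)*2)) * him + (1:k) * invOf_mul_self (2:k)
      | linear_combination (norm := ring1) (-(⅟(2:k)*2)) * him + (-1:k) * invOf_mul_self (2:k)
      | linear_combination (norm := ring1) (-(⅟(2:k)*2)) * him + (⅟(2:k)) * invOf_mul_self (2:k)
      | linear_combination (norm := ring1) (-(⅟(2:k)*2)) * him + (-(⅟(2:k))) * invOf_mul_self (2:k)
      | linear_combination (norm := ring1) (⅟(2:k)) * him + (1:k) * invOf_mul_self (2:k)
      | linear_combination (norm := ring1) (⅟(2:k)) * him + (-1:k) * invOf_mul_self (2:k)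
      | linear_combination (norm := ring1) (⅟(2:k)) * him + (⅟(2:k)) * invOf_mul_self (2:k)
      | linear_combination (norm := ring1) (⅟(2:k)) * him + (-(⅟(2:k))) * invOf_mul_self (2:k)
      | linear_combination (norm := ring1) (-(⅟(2:k))) * him + (1:k) * invOf_mul_self (2:k)
      | linear_combination (norm := ring1) (-(⅟(2:k))) * him + (-1:k) * invOf_mul_self (2:k)
      | linear_combination (norm := ring1) (-(⅟(2:k))) * him + (⅟(2:k)) * invOf_mul_self (2:k)
      | linear_combination (norm := ring1) (-(⅟(2:k))) * him + (-(⅟(2:k))) * invOf_mul_self (2:k)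
      | linear_combination (norm := ring1) (2:k) * him + (1:k) * invOf_mul_self (2:k)
      | linear_combination (norm := ring1) (2:k) * him + (-1:k) * invOf_mul_self (2:k)
      | linear_combination (norm := ring1) (2:k) * him + (⅟(2:k)) * invOf_mul_self (2:k)
      | linear_combination (norm := ring1) (2:k) * him + (-(⅟(2:k))) * invOf_mul_self (2:k)
      | linear_combination (norm := ring1) (-2:k) * him + (1:k) * invOf_mul_self (2:k)
      | linear_combination (norm := ring1) (-2:k) * him + (-1:k) * invOf_mul_self (2:k)
      | linear_combination (norm := ring1) (-2:k) * him + (⅟(2:k)) * invOf_mul_self (2:k)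
      | linear_combination (norm := ring1) (-2:k) * him + (-(⅟(2:k))) * invOf_mul_self (2:k))


lemma phi_add (n : ℕ) (A B : Matrix (Fin n ⊕ Fin n) (Fin n ⊕ Fin n) (R × R)) :
    phiFun im n (A + B) = phiFun im n A + phiFun im n B := by
  ext x y
  rcases x with i | i <;> rcases y with j | j <;>
    simp only [phiFun, Matrix.of_apply, Sum.elim_inl, Sum.elim_inr, Matrix.add_apply,
      Prod.fst_add, Prod.snd_add, smul_add, neg_add] <;> abel

lemma phi_sub (n : ℕ) (A B : Matrix (Fin n ⊕ Fin n) (Fin n ⊕ Fin n) (R × R)) :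
    phiFun im n (A - B) = phiFun im n A - phiFun im n B := by
  ext x y
  rcases x with i | i <;> rcases y with j | j <;>
    simp only [phiFun, Matrix.of_apply, Sum.elim_inl, Sum.elim_inr, Matrix.sub_apply,
      Prod.fst_sub, Prod.snd_sub, smul_sub, neg_sub] <;> abel

lemma phi_smul (n : ℕ) (c : k) (A : Matrix (Fin n ⊕ Fin n) (Fin n ⊕ Fin n) (R × R)) :
    phiFun im n (c • A) = c • phiFun im n A := by
  ext x y
  rcases x with i | i <;> rcases y with j | j <;>
    simp only [phiFun, Matrix.of_apply, Sum.elim_inl, Sum.elim_inr, Matrix.smul_apply,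
      Prod.smul_fst, Prod.smul_snd, smul_add, smul_sub, smul_neg, smul_comm c im] <;> abel

lemma phi_mul (hσ : ∀ a, σ (σ a) = a) (him : im * im = -1) (n : ℕ)
    (M N : Matrix (Fin n ⊕ Fin n) (Fin n ⊕ Fin n) (R × R))
    (hN : N ∈ qSub n (R × R) (tauL σ)) :
    phiFun im n (mmulQ σ M N) = phiFun im n M * phiFun im n N := by
  obtain ⟨h1, h2⟩ := mem_qSub_iff.mp hN
  ext x y
  rcases x with i | i <;> rcases y with j | j <;>
  · simp only [phiFun, mmulQ, Matrix.of_apply, Sum.elim_inl, Sum.elim_inr, Matrix.mul_apply,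
      Fintype.sum_sum_type, Prod.fst_sum, Prod.snd_sum, smul_add, Finset.smul_sum,
      neg_add, sub_eq_add_neg, ← Finset.sum_neg_distrib, ← Finset.sum_add_distrib]
    refine Finset.sum_congr rfl fun c _ => ?_
    simp only [mulQ, h1, h2, tauL_fst, tauL_snd, map_add, map_sub, map_neg, map_smul, hσ,
      mul_add, add_mul, sub_mul, mul_sub, neg_mul, mul_neg, smul_mul_assoc, mul_smul_comm,
      smul_smul, smul_neg, neg_neg, smul_add, smul_sub, Prod.fst_add, Prod.snd_add]
    match_scalars <;>
    (first
      | ring1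
      | linear_combination (norm := ring1) him
      | linear_combination (norm := ring1) (-1:k) * him)

end Aux

open Matrix in
/-- Suppose `k` contains `i` with `i² = -1` (and 2 invertible).  For any unital
associative superalgebra `R` there is an isomorphism of Lie superalgebras
`q_n(R ⊗ Q1) ≅ gl_{n|n}(R)` given on generators by
`u_{ij}(r⊗1) ↦ e_{ij}(r) + (-1)^{|r|} e_{n+i,n+j}(r)`,
`u_{ij}(r⊗ν) ↦ e_{i,n+j}(r) + (-1)^{|r|} e_{n+i,j}(r)`,
`w_{ij}(r⊗1) ↦ i(-e_{i,n+j}(r) + (-1)^{|r|} e_{n+i,j}(r))`,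
`w_{ij}(r⊗ν) ↦ i(e_{ij}(r) - (-1)^{|r|} e_{n+i,n+j}(r))`,
where `(-1)^{|r|} r` is implemented by `σ r` (its linear extension), and preserving the graded
commutators of homogeneous elements. -/
theorem q_RQ1_iso_gl (σ : R ≃ₐ[k] R) (hσ : ∀ a, σ (σ a) = a)
    (im : k) (him : im * im = -1) (n : ℕ) :
    ∃ Φ : ↥(qSub n (R × R) (tauL σ)) ≃ₗ[k] Matrix (Fin n ⊕ Fin n) (Fin n ⊕ Fin n) R,
      (∀ (M : ↥(qSub n (R × R) (tauL σ))) (i j : Fin n) (r : R),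
        (((M : Matrix (Fin n ⊕ Fin n) (Fin n ⊕ Fin n) (R × R)) = uMat n (tauQ σ) i j ((r, 0) : R × R) →
          Φ M = Matrix.single (Sum.inl i) (Sum.inl j) r
              + Matrix.single (Sum.inr i) (Sum.inr j) (σ r)) ∧
         ((M : Matrix (Fin n ⊕ Fin n) (Fin n ⊕ Fin n) (R × R)) = uMat n (tauQ σ) i j ((0, r) : R × R) →
          Φ M = Matrix.single (Sum.inl i) (Sum.inr j) r
              + Matrix.single (Sum.inr i) (Sum.inl j) (σ r)) ∧
         ((M : Matrix (Fin n ⊕ Fin n) (Fin n ⊕ Fin n) (R × R)) = wMat n (tauQ σ) i j ((r, 0) : R × R) →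
          Φ M = im • (-(Matrix.single (Sum.inl i) (Sum.inr j) r)
              + Matrix.single (Sum.inr i) (Sum.inl j) (σ r))) ∧
         ((M : Matrix (Fin n ⊕ Fin n) (Fin n ⊕ Fin n) (R × R)) = wMat n (tauQ σ) i j ((0, r) : R × R) →
          Φ M = im • (Matrix.single (Sum.inl i) (Sum.inl j) r
              - Matrix.single (Sum.inr i) (Sum.inr j) (σ r))))) ∧
      (∀ (M N P : ↥(qSub n (R × R) (tauL σ))) (pM pN : ZMod 2),
        gInvMat (tauQ σ) (M : Matrix (Fin n ⊕ Fin n) (Fin n ⊕ Fin n) (R × R))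
            = ((-1 : ℤ) ^ pM.val) • (M : Matrix (Fin n ⊕ Fin n) (Fin n ⊕ Fin n) (R × R)) →
        gInvMat (tauQ σ) (N : Matrix (Fin n ⊕ Fin n) (Fin n ⊕ Fin n) (R × R))
            = ((-1 : ℤ) ^ pN.val) • (N : Matrix (Fin n ⊕ Fin n) (Fin n ⊕ Fin n) (R × R)) →
        (P : Matrix (Fin n ⊕ Fin n) (Fin n ⊕ Fin n) (R × R))
            = mmulQ σ (M : Matrix (Fin n ⊕ Fin n) (Fin n ⊕ Fin n) (R × R)) (N : Matrix (Fin n ⊕ Fin n) (Fin n ⊕ Fin n) (R × R))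
            - ((-1 : ℤ) ^ (pM * pN).val) •
                mmulQ σ (N : Matrix (Fin n ⊕ Fin n) (Fin n ⊕ Fin n) (R × R)) (M : Matrix (Fin n ⊕ Fin n) (Fin n ⊕ Fin n) (R × R)) →
        Φ P = Φ M * Φ N - ((-1 : ℤ) ^ (pM * pN).val) • (Φ N * Φ M)) := by
  refine ⟨{ toFun := fun M => phiFun im n (M : Matrix (Fin n ⊕ Fin n) (Fin n ⊕ Fin n) (R × R)),
            map_add' := fun A B => by
              simp only [Submodule.coe_add]; exact phi_add im n _ _,
            map_smul' := fun c A => by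
              simp only [SetLike.val_smul, RingHom.id_apply]; exact phi_smul im n c _,
            invFun := fun X => ⟨psiFun σ im n X, psi_mem σ im n X⟩,
            left_inv := fun M => Subtype.ext (psi_phi σ im hσ him n _ M.2),
            right_inv := fun X => phi_psi σ im hσ him n X }, ?_, ?_⟩
  · intro M i j r
    refine ⟨fun h => ?_, fun h => ?_, fun h => ?_, fun h => ?_⟩ <;>
    · show phiFun im n (M : Matrix (Fin n ⊕ Fin n) (Fin n ⊕ Fin n) (R × R)) = _
      rw [h]
      ext x y
      rcases x with a | a <;> rcases y with b | b <;>
        simp only [phiFun, uMat, wMat, tauQ, Matrix.of_apply, Sum.elim_inl, Sum.elim_inr,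
          Matrix.add_apply, Matrix.sub_apply, Matrix.neg_apply, Matrix.smul_apply,
          Matrix.single, Prod.fst_add, Prod.snd_add, Sum.inl.injEq, Sum.inr.injEq,
          and_false, false_and, if_false, reduceCtorEq] <;>
        split_ifs <;>
        simp_all <;>
        abel
  · intro M N P pM pN _ _ hP
    show phiFun im n (P : Matrix (Fin n ⊕ Fin n) (Fin n ⊕ Fin n) (R × R))
        = phiFun im n (M : Matrix (Fin n ⊕ Fin n) (Fin n ⊕ Fin n) (R × R))
            * phiFun im n (N : Matrix (Fin n ⊕ Fin n) (Fin n ⊕ Fin n) (R × R))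
          - ((-1 : ℤ) ^ (pM * pN).val) •
            (phiFun im n (N : Matrix (Fin n ⊕ Fin n) (Fin n ⊕ Fin n) (R × R))
              * phiFun im n (M : Matrix (Fin n ⊕ Fin n) (Fin n ⊕ Fin n) (R × R)))
    have hv : (pM * pN).val = 0 ∨ (pM * pN).val = 1 := by
      have := ZMod.val_lt (pM * pN); omega
    rcases hv with hv | hv <;> rw [hv] at hP ⊢
    · rw [pow_zero, one_smul] at hP ⊢
      rw [hP, phi_sub, phi_mul σ im hσ him n _ _ N.2, phi_mul σ im hσ him n _ _ M.2]
    · rw [pow_one, neg_one_zsmul, sub_neg_eq_add] at hP ⊢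
      rw [hP, phi_add, phi_mul σ im hσ him n _ _ N.2, phi_mul σ im hσ him n _ _ M.2]
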